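/- For every real q > 1, the mean of the q-norms exists and equals lim_{N→∞} (1/N) ∑_{n=1}^N ‖n‖_q = 1/(q−1) + ln((q−1)/q). -/

import Mathlib

open Filter Finset Topology

private lemma aux_div_tendsto {k : ℕ} (hk : 0 < k) :
    Tendsto (fun N : ℕ => ((N / k : ℕ) : ℝ) / N) atTop (𝓝 (1 / k)) := by
  have hk' : (0 : ℝ) < k := by exact_mod_cast hk
  apply tendsto_of_tendsto_of_tendsto_of_le_of_le'
    (g := fun N : ℕ => 1 / (k : ℝ) - 1 / N) (h := fun _ : ℕ => 1 / (k : ℝ))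
  · simpa using tendsto_const_nhds.sub (tendsto_one_div_atTop_nhds_zero_nat (𝕜 := ℝ))
  · exact tendsto_const_nhds
  · filter_upwards [eventually_ge_atTop 1] with N hN
    have hN' : (0 : ℝ) < N := by exact_mod_cast hN
    have hlt : (N : ℝ) < ((N / k : ℕ) : ℝ) * k + k := by
      have h1 : N < k * (N / k) + k := by
        calc N = k * (N / k) + N % k := (Nat.div_add_mod N k).symm
          _ < k * (N / k) + k := by
              exact Nat.add_lt_add_left (Nat.mod_lt N hk) _
      calc (N : ℝ) < ((k * (N / k) + k : ℕ) : ℝ) := by exact_mod_cast h1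
        _ = ((N / k : ℕ) : ℝ) * k + k := by push_cast; ring
    rw [sub_le_iff_le_add, ← add_div, div_le_div_iff₀ hk' hN']
    nlinarith
  · filter_upwards with N
    rcases Nat.eq_zero_or_pos N with rfl | hN
    · simp
    · have hN' : (0 : ℝ) < N := by exact_mod_cast hN
      rw [div_le_div_iff₀ hN' hk']
      have : ((N / k : ℕ) : ℝ) * k ≤ N := by
        exact_mod_cast Nat.div_mul_le_self N k
      linarith

/-- The q-norm of an integer n: sum of 1/q^k over positive integers k not dividing n. -/
noncomputable def qnorm (q : ℝ) (n : ℤ) : ℝ :=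
  ∑' k : ℕ, if 1 ≤ k ∧ ¬ ((k : ℤ) ∣ n) then 1 / q ^ k else 0

theorem stmt_9 (q : ℝ) (hq : 1 < q) :
    Filter.Tendsto
      (fun N : ℕ => (∑ n ∈ Finset.Icc 1 N, qnorm q (n : ℤ)) / (N : ℝ))
      Filter.atTop (nhds (1 / (q - 1) + Real.log ((q - 1) / q))) := by
  have hq0 : 0 < q := lt_trans one_pos hq
  have hr0 : 0 ≤ 1 / q := by positivity
  have hr1 : 1 / q < 1 := by rw [div_lt_one hq0]; exact hq
  have hgeom : Summable (fun k : ℕ => (1 / q) ^ k) :=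
    summable_geometric_of_lt_one hr0 hr1
  set F : ℕ → ℕ → ℝ := fun N k =>
    if 1 ≤ k then (((N - N / k : ℕ) : ℝ) / N) * (1 / q ^ k) else 0 with hF
  set G : ℕ → ℝ := fun k =>
    if 1 ≤ k then (1 - 1 / (k : ℝ)) * (1 / q ^ k) else 0 with hG
  have key : ∀ N : ℕ, (∑ n ∈ Finset.Icc 1 N, qnorm q (n : ℤ)) / (N : ℝ)
      = ∑' k, F N k := by
    intro N
    have hsummand : ∀ n ∈ Finset.Icc 1 N, Summable
        (fun k : ℕ => if 1 ≤ k ∧ ¬ ((k : ℤ) ∣ (n : ℤ)) then 1 / q ^ k else 0) := by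
      intro n _
      apply Summable.of_nonneg_of_le (fun k => by positivity) _ hgeom
      intro k
      split
      · rw [one_div_pow]
      · positivity
    have h1 : (∑ n ∈ Finset.Icc 1 N, qnorm q (n : ℤ))
        = ∑' k : ℕ, ∑ n ∈ Finset.Icc 1 N,
            (if 1 ≤ k ∧ ¬ ((k : ℤ) ∣ (n : ℤ)) then 1 / q ^ k else 0) := by
      unfold qnorm
      rw [Summable.tsum_finsetSum hsummand]
    have h2 : ∀ k : ℕ, (∑ n ∈ Finset.Icc 1 N,
          (if 1 ≤ k ∧ ¬ ((k : ℤ) ∣ (n : ℤ)) then 1 / q ^ k else 0)) / (N : ℝ)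
        = F N k := by
      intro k
      rcases Nat.eq_zero_or_pos k with rfl | hk
      · simp [hF]
      · have hk1 : 1 ≤ k := hk
        have hcond : ∀ n : ℕ, (1 ≤ k ∧ ¬ ((k : ℤ) ∣ (n : ℤ))) ↔ ¬ (k ∣ n) := by
          intro n
          rw [Int.natCast_dvd_natCast]
          exact ⟨fun h => h.2, fun h => ⟨hk1, h⟩⟩
        have hsum : (∑ n ∈ Finset.Icc 1 N,
            (if 1 ≤ k ∧ ¬ ((k : ℤ) ∣ (n : ℤ)) then 1 / q ^ k else 0))
            = ((N - N / k : ℕ) : ℝ) * (1 / q ^ k) := by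
          simp only [hcond]
          rw [← Finset.sum_filter, Finset.sum_const, nsmul_eq_mul]
          congr 2
          have hcards : ({n ∈ Finset.Icc 1 N | k ∣ n}).card
              + ({n ∈ Finset.Icc 1 N | ¬ k ∣ n}).card = N := by
            rw [Finset.card_filter_add_card_filter_not]
            simp
          have hdiv : ({n ∈ Finset.Icc 1 N | k ∣ n}).card = N / k := by
            have hIcc : Finset.Icc 1 N = Finset.Ioc 0 N := by
              rw [← Finset.Icc_add_one_left_eq_Ioc]; rfl
            rw [hIcc, Nat.Ioc_filter_dvd_card_eq_div]
          omega
        rw [hsum, hF]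
        simp only [if_pos hk1]
        ring
    rw [h1, ← tsum_div_const]
    exact tsum_congr h2
  simp only [key]
  have hGsum : HasSum G (1 / (q - 1) + Real.log ((q - 1) / q)) := by
    have habs : |1 / q| < 1 := by rwa [abs_of_nonneg hr0]
    have hlog := Real.hasSum_pow_div_log_of_abs_lt_one habs
    have hgeom' : HasSum (fun n : ℕ => (1 / q) ^ (n + 1)) (1 / (q - 1)) := by
      have h0 := (hasSum_geometric_of_lt_one hr0 hr1).mul_left (1 / q)
      have h2 : (1 / q) * (1 - 1 / q)⁻¹ = 1 / (q - 1) := by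
        field_simp
      rw [h2] at h0
      have hfun : (fun n : ℕ => (1 / q) ^ (n + 1)) = fun i : ℕ => 1 / q * (1 / q) ^ i := by
        funext n; rw [pow_succ, mul_comm]
      rw [hfun]
      exact h0
    have hsub := hgeom'.sub hlog
    have hval : 1 / (q - 1) - -Real.log (1 - 1 / q)
        = 1 / (q - 1) + Real.log ((q - 1) / q) := by
      have h3 : 1 - 1 / q = (q - 1) / q := by field_simp
      rw [h3]; ring
    rw [hval] at hsub
    apply (hasSum_nat_add_iff' (f := G) 1).mp
    have hrange : ∑ i ∈ Finset.range 1, G i = 0 := by simp [hG]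
    rw [hrange, sub_zero]
    have hfun : (fun n : ℕ => G (n + 1))
        = fun n : ℕ => (1 / q) ^ (n + 1) - (1 / q) ^ (n + 1) / ((n : ℝ) + 1) := by
      funext n
      simp only [hG, if_pos (Nat.le_add_left 1 n)]
      push_cast
      rw [one_div_pow, sub_mul, one_mul, one_div_mul_eq_div]
    rw [hfun]
    exact hsub
  rw [← hGsum.tsum_eq]
  apply tendsto_tsum_of_dominated_convergence hgeom
  · intro k
    rcases Nat.eq_zero_or_pos k with rfl | hk
    · simp only [hF, hG]
      norm_num
    · have hk1 : 1 ≤ k := hk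
      simp only [hF, hG, if_pos hk1]
      apply Tendsto.mul_const
      have hmain := aux_div_tendsto hk
      have : Tendsto (fun N : ℕ => 1 - ((N / k : ℕ) : ℝ) / N) atTop
          (𝓝 (1 - 1 / k)) := tendsto_const_nhds.sub hmain
      apply this.congr'
      filter_upwards [eventually_ge_atTop 1] with N hN
      have hN' : (0 : ℝ) < N := by exact_mod_cast hN
      rw [Nat.cast_sub (Nat.div_le_self N k), sub_div, div_self hN'.ne']
  · filter_upwards with N k
    rcases Nat.eq_zero_or_pos k with rfl | hk
    · simp [hF]
    · have hk1 : 1 ≤ k := hk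
      simp only [hF, if_pos hk1]
      have h2 : ((N - N / k : ℕ) : ℝ) / N ≤ 1 := by
        apply div_le_one_of_le₀
        · exact_mod_cast Nat.sub_le N (N / k)
        · positivity
      rw [Real.norm_eq_abs, abs_of_nonneg (by positivity)]
      calc ((N - N / k : ℕ) : ℝ) / N * (1 / q ^ k) ≤ 1 / q ^ k :=
            mul_le_of_le_one_left (by positivity) h2
        _ = (1 / q) ^ k := (one_div_pow q k).symm
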